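/- Let G = G₁ * G₂ be a free product of groups and let c, α ∈ G with c⁻¹αc = α (c centralizes α). If α is not conjugate into either factor G₁ or G₂, then there exists h ∈ G and integers m, n with α = hᵐ and c = hⁿ. -/

import Mathlib

open Monoid CoprodI CoprodI.Word List

namespace FPC

set_option linter.unusedSectionVars false
variable {ι : Type*} [DecidableEq ι] {M : ι → Type*} [∀ i, Group (M i)]
  [∀ i, DecidableEq (M i)]

/-- normal form -/
noncomputable def nf (g : CoprodI M) : Word M := Word.equiv g

@[simp] lemma prod_nf (g : CoprodI M) : (nf g).prod = g :=
  Word.equiv.symm_apply_apply g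

@[simp] lemma nf_prod (w : Word M) : nf w.prod = w :=
  Word.equiv.apply_symm_apply w

lemma nf_mul (g h : CoprodI M) : nf (g * h) = g • nf h := by
  have : (g • nf h).prod = g * h := by
    rw [Word.prod_smul, prod_nf]
  rw [← this, nf_prod]

noncomputable def ell (g : CoprodI M) : ℕ := (nf g).toList.length

/-- raw product of a list of letters -/
def lprod (L : List (Σ i, M i)) : CoprodI M := (L.map fun l => CoprodI.of l.2).prod

lemma word_prod_eq_lprod (w : Word M) : w.prod = lprod w.toList := rfl

lemma lprod_append (L₁ L₂ : List (Σ i, M i)) : lprod (L₁ ++ L₂) = lprod L₁ * lprod L₂ := by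
  simp [lprod]

lemma rcons_equivPair (i : ι) (w : Word M) : Word.rcons (Word.equivPair i w) = w := by
  rw [← Word.equivPair_symm]; exact (Word.equivPair i).symm_apply_apply w

lemma smul_letter_toList (i : ι) (m : M i) (w : Word M) :
    ∃ j l, j ≤ 1 ∧ List.length l ≤ 1 ∧
      (CoprodI.of m • w).toList = l ++ w.toList.drop j := by
  rw [Word.of_smul_def]
  by_cases h : w.fstIdx = some i
  · have hp := rcons_equivPair i w
    set p := Word.equivPair i w with hpdef
    have hhead : p.head ≠ 1 := by
      intro h1
      rw [Word.rcons, dif_pos h1] at hp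
      exact p.fstIdx_ne (hp ▸ h)
    have hlist : w.toList = ⟨i, p.head⟩ :: p.tail.toList := by
      conv_lhs => rw [← hp]
      rw [Word.rcons, dif_neg hhead]
      rfl
    rw [Word.rcons]
    split_ifs with h1
    · exact ⟨1, [], by simp, by simp, by simp [hlist]⟩
    · exact ⟨1, [⟨i, m * p.head⟩], le_refl _, by simp, by simp [Word.cons, hlist]⟩
  · rw [Word.equivPair_eq_of_fstIdx_ne h]
    rw [Word.rcons]
    split_ifs with h1
    · exact ⟨0, [], by simp, by simp, by simp⟩
    · exact ⟨0, [⟨i, m * 1⟩], by simp, by simp, by simp [Word.cons]⟩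

lemma smul_list_toList (L : List (Σ i, M i)) (w : Word M) :
    ∃ j l, j ≤ L.length ∧ List.length l ≤ L.length ∧
      (lprod L • w).toList = l ++ w.toList.drop j := by
  induction L with
  | nil => exact ⟨0, [], by simp, by simp, by simp [lprod]⟩
  | cons a L ih =>
    obtain ⟨j, l, hj, hl, hw⟩ := ih
    obtain ⟨j₁, l₁, hj₁, hl₁, hw₁⟩ := smul_letter_toList a.1 a.2 (lprod L • w)
    have hsm : lprod (a :: L) • w = CoprodI.of a.2 • (lprod L • w) := by
      rw [show lprod (a :: L) = CoprodI.of a.2 * lprod L from by simp [lprod], mul_smul]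
    refine ⟨j + (j₁ - l.length), l₁ ++ l.drop j₁, by simp only [List.length_cons]; omega, ?_, ?_⟩
    · simp only [List.length_append, List.length_cons, List.length_drop]
      omega
    · rw [hsm, hw₁, hw, List.drop_append, List.drop_drop, List.append_assoc, Nat.add_comm j]

lemma smul_nf_suffix (g : CoprodI M) (w : Word M) :
    ∃ j l, j ≤ ell g ∧ List.length l ≤ ell g ∧
      (g • w).toList = l ++ w.toList.drop j := by
  have := smul_list_toList (nf g).toList w
  rwa [← word_prod_eq_lprod, prod_nf] at this
def linv (L : List (Σ i, M i)) : List (Σ i, M i) := (L.map fun l => ⟨l.1, l.2⁻¹⟩).reverse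

lemma linv_linv (L : List (Σ i, M i)) : linv (linv L) = L := by
  simp only [linv, List.map_reverse, List.reverse_reverse, List.map_map]
  exact List.map_id'' (fun l => by cases l; simp) L

lemma length_linv (L : List (Σ i, M i)) : (linv L).length = L.length := by simp [linv]

lemma reverse_drop' {α : Type*} : ∀ (K : List α) (j : ℕ),
    (K.drop j).reverse = K.reverse.take (K.length - j)
  | K, 0 => by simp
  | [], j+1 => by simp
  | a :: K, j+1 => by
    rw [List.drop_succ_cons, reverse_drop' K j, List.reverse_cons,
      List.take_append_of_le_length (by simp)]
    congr 1
    simp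

lemma linv_drop (L : List (Σ i, M i)) (j : ℕ) :
    linv (L.drop j) = (linv L).take (L.length - j) := by
  rw [linv, List.map_drop, reverse_drop', List.length_map, ← linv]

lemma linv_append (A B : List (Σ i, M i)) : linv (A ++ B) = linv B ++ linv A := by
  simp [linv]

def winv (w : Word M) : Word M where
  toList := linv w.toList
  ne_one := by
    intro l hl
    simp only [linv, List.mem_reverse, List.mem_map] at hl
    obtain ⟨a, ha, rfl⟩ := hl
    simpa using w.ne_one a ha
  chain_ne := by
    rw [linv, List.isChain_reverse, List.isChain_map]
    exact w.chain_ne.imp (fun a b h => Ne.symm h)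

lemma prod_winv (w : Word M) : (winv w).prod = w.prod⁻¹ := by
  rw [word_prod_eq_lprod, word_prod_eq_lprod, lprod, lprod, List.prod_inv_reverse]
  show ((winv w).toList.map fun l => CoprodI.of l.2).prod = _
  rw [show (winv w).toList = linv w.toList from rfl, linv, List.map_reverse, List.map_map,
    List.map_map]
  congr 2

lemma nf_inv (g : CoprodI M) : nf g⁻¹ = winv (nf g) := by
  have : (winv (nf g)).prod = g⁻¹ := by rw [prod_winv, prod_nf]
  rw [← this, nf_prod]

lemma winv_winv (w : Word M) : winv (winv w) = w := by
  apply CoprodI.Word.ext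
  exact linv_linv w.toList

lemma ell_inv (g : CoprodI M) : ell g⁻¹ = ell g := by
  rw [ell, ell, nf_inv]
  exact length_linv _

lemma mul_nf_prefix (u : Word M) (g : CoprodI M) :
    ∃ j r, j ≤ ell g ∧ List.length r ≤ ell g ∧
      (nf (u.prod * g)).toList = u.toList.take (u.toList.length - j) ++ r := by
  obtain ⟨j, l, hj, hl, h⟩ := smul_nf_suffix g⁻¹ (winv u)
  have h2 : nf ((u.prod * g)⁻¹) = g⁻¹ • winv u := by
    rw [mul_inv_rev, nf_mul]
    congr 1
    rw [nf_inv, nf_prod]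
  have h3 : nf (u.prod * g) = winv (nf ((u.prod * g)⁻¹)) := by
    rw [nf_inv, winv_winv]
  refine ⟨j, linv l, by rwa [ell_inv] at hj, by rw [length_linv]; rwa [ell_inv] at hl, ?_⟩
  rw [h3, h2, show (winv (g⁻¹ • winv u)).toList = linv ((g⁻¹ • winv u).toList) from rfl, h,
    linv_append, show (winv u).toList = linv u.toList from rfl, linv_drop, linv_linv,
    length_linv]
lemma lprod_nf (g : CoprodI M) : g = lprod (nf g).toList := by
  rw [← word_prod_eq_lprod, prod_nf]

lemma ell_word (w : Word M) : ell w.prod = w.toList.length := by rw [ell, nf_prod]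

lemma cyclic_reduction : ∀ (n : ℕ) (g : CoprodI M), ell g = n →
    (g = 1 ∨ ∃ (u : CoprodI M) (i : ι) (x : M i), g = u * CoprodI.of x * u⁻¹) ∨
    (∃ (u : CoprodI M) (w : Word M) (a b : Σ i, M i),
      w.toList.head? = some a ∧ w.toList.getLast? = some b ∧ a.1 ≠ b.1 ∧
      g = u * w.prod * u⁻¹) := by
  intro n
  induction n using Nat.strong_induction_on with
  | _ n ih =>
  intro g hn
  rcases hL : (nf g).toList with _ | ⟨x, rest⟩
  · left; left
    rw [lprod_nf g, hL]; rfl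
  · by_cases hrest : rest = []
    · left; right
      refine ⟨1, x.1, x.2, ?_⟩
      rw [lprod_nf g, hL, hrest]
      simp [lprod]
    · rcases x with ⟨i, xv⟩
      rcases hY : rest.getLast hrest with ⟨j, yv⟩
      have hY' : rest.getLast? = some ⟨j, yv⟩ := by
        rw [List.getLast?_eq_getLast hrest, hY]
      by_cases hij : i = j
      · subst hij
        have hmid := List.dropLast_append_getLast hrest
        rw [hY] at hmid
        set mid := rest.dropLast with hmiddef
        have hchainL : ((⟨i, xv⟩ : Σ i, M i) :: rest).Chain' (fun a b => a.1 ≠ b.1) := by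
          rw [← hL]; exact (nf g).chain_ne
        have hne1L : ∀ l ∈ ((⟨i, xv⟩ : Σ i, M i) :: rest), Sigma.snd l ≠ 1 := by
          rw [← hL]; exact (nf g).ne_one
        have hchainMid : (mid ++ [(⟨i, yv⟩ : Σ i, M i)]).Chain' (fun a b => a.1 ≠ b.1) := by
          rw [hmid]; exact hchainL.tail
        have hmidlen : rest.length = mid.length + 1 := by
          conv_lhs => rw [← hmid]
          simp
        have hnval : n = mid.length + 2 := by
          rw [← hn, ell]; rw [hL]
          simp [hmidlen]
        have hg : g = CoprodI.of xv * (lprod mid * CoprodI.of yv) := by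
          rw [lprod_nf g, hL]
          conv_lhs => rw [← hmid]
          simp [lprod, mul_assoc]
        set g' := (CoprodI.of xv)⁻¹ * g * CoprodI.of xv with hg'def
        have hgg' : g = CoprodI.of xv * g' * (CoprodI.of xv)⁻¹ := by
          rw [hg'def]; group
        have hg'eq : g' = lprod mid * CoprodI.of (yv * xv) := by
          rw [hg'def, hg, map_mul]
          group
        have hell : ell g' < n := by
          by_cases hyx : yv * xv = 1
          · have : g' = (⟨mid, fun l hl => hne1L l (List.mem_cons_of_mem _
                (by rw [← hmid]; exact List.mem_append_left _ hl)),
                hchainMid.prefix (List.prefix_append _ _)⟩ : Word M).prod := by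
              rw [hg'eq, hyx, map_one, mul_one, word_prod_eq_lprod]
            rw [this, ell_word]
            simp [hnval]
          · have hch2 : (mid ++ [(⟨i, yv * xv⟩ : Σ i, M i)]).Chain'
                (fun a b => a.1 ≠ b.1) := by
              rw [List.Chain', List.isChain_append] at hchainMid ⊢
              exact ⟨hchainMid.1, List.isChain_singleton _, by simpa using hchainMid.2.2⟩
            have hne2 : ∀ l ∈ (mid ++ [(⟨i, yv * xv⟩ : Σ i, M i)]), Sigma.snd l ≠ 1 := by
              intro l hl
              rcases List.mem_append.1 hl with h | h
              · exact hne1L l (List.mem_cons_of_mem _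
                  (by rw [← hmid]; exact List.mem_append_left _ h))
              · rcases List.mem_singleton.1 h with rfl
                exact hyx
            have : g' = (⟨mid ++ [(⟨i, yv * xv⟩ : Σ i, M i)], hne2, hch2⟩ : Word M).prod := by
              rw [hg'eq, word_prod_eq_lprod, lprod_append]
              simp [lprod]
            rw [this, ell_word]
            simp [hnval]
        rcases ih (ell g') hell g' rfl with (h1 | ⟨u, i', x', hx'⟩) | ⟨u, w, a, b, ha, hb, hab, hw⟩
        · left; left
          rw [hgg', h1]; group
        · left; right
          exact ⟨CoprodI.of xv * u, i', x', by rw [hgg', hx']; group⟩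
        · right
          exact ⟨CoprodI.of xv * u, w, a, b, ha, hb, hab, by rw [hgg', hw]; group⟩
      · right
        refine ⟨1, nf g, ⟨i, xv⟩, ⟨j, yv⟩, by rw [hL]; rfl,
          by rw [hL]; exact List.mem_getLast?_cons hY', hij, by rw [prod_nf]; group⟩
lemma getElem_congr'' {β : Type*} (L : List β) {i j : ℕ} (h : i = j) (hi : i < L.length) :
    L[i]'hi = L[j]'(h ▸ hi) := by subst h; rfl

section Central

variable (W : Word M) (hW : W.toList ≠ [])

/-- the bi-infinite periodic word -/
def Xi (W : Word M) (hW : W.toList ≠ []) (t : ℤ) : Σ i, M i :=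
  W.toList[(t % (W.toList.length : ℤ)).toNat]'(by
    have hN : 0 < W.toList.length := List.length_pos_iff.2 hW
    have h1 : 0 ≤ t % (W.toList.length : ℤ) :=
      Int.emod_nonneg t (by exact_mod_cast hN.ne')
    have h2 : t % (W.toList.length : ℤ) < W.toList.length :=
      Int.emod_lt_of_pos t (by exact_mod_cast hN)
    omega)

lemma Xi_congr {t t' : ℤ} (h : t % (W.toList.length : ℤ) = t' % (W.toList.length : ℤ)) :
    Xi W hW t = Xi W hW t' := by
  unfold Xi
  exact getElem_congr'' _ (by rw [h]) _

lemma Xi_per (t : ℤ) : Xi W hW (t + W.toList.length) = Xi W hW t :=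
  Xi_congr W hW (by
    rw [show t + (W.toList.length : ℤ) = t + (W.toList.length : ℤ) * 1 by ring,
      Int.add_mul_emod_self_left])

lemma Xi_nat (t : ℕ) (ht : t < W.toList.length) :
    Xi W hW t = W.toList[t]'ht := by
  unfold Xi
  exact getElem_congr'' _ (by
    rw [Int.emod_eq_of_lt (by positivity) (by exact_mod_cast ht)]
    simp) _

lemma Xi_ne_one (t : ℤ) : (Xi W hW t).2 ≠ 1 :=
  W.ne_one _ (List.getElem_mem _)

/-- the subgroup of periods of the periodic word -/
def periods : AddSubgroup ℤ where
  carrier := {p | ∀ t, Xi W hW (t + p) = Xi W hW t}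
  zero_mem' := by simp
  add_mem' := by
    intro p q hp hq t
    rw [← add_assoc]
    rw [show Xi W hW (t + p + q) = Xi W hW (t + p) from hq (t + p), hp t]
  neg_mem' := by
    intro p hp t
    have h := hp (t - p)
    rw [sub_add_cancel] at h
    rw [← sub_eq_add_neg]
    exact h.symm

lemma mem_periods (p : ℤ) : p ∈ periods W hW ↔ ∀ t, Xi W hW (t + p) = Xi W hW t := Iff.rfl

lemma N_mem_periods : (W.toList.length : ℤ) ∈ periods W hW := Xi_per W hW

lemma two_le_N (W : Word M) {a b : Σ i, M i} (ha : W.toList.head? = some a)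
    (hb : W.toList.getLast? = some b) (hab : a.1 ≠ b.1) : 2 ≤ W.toList.length := by
  match hL : W.toList with
  | [] => rw [hL] at ha; simp at ha
  | [x] =>
    rw [hL] at ha hb
    simp only [List.head?_cons, Option.some.injEq] at ha
    simp only [List.getLast?_singleton, Option.some.injEq] at hb
    exact absurd rfl (ha ▸ hb ▸ hab)
  | x :: y :: L => simp [hL]

lemma Xi_adj (W : Word M) (hW : W.toList ≠ []) {a b : Σ i, M i}
    (ha : W.toList.head? = some a) (hb : W.toList.getLast? = some b) (hab : a.1 ≠ b.1) :
    ∀ t : ℤ, (Xi W hW t).1 ≠ (Xi W hW (t + 1)).1 := by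
  intro t
  have hN : 0 < W.toList.length := List.length_pos_iff.2 hW
  have hN2 : 2 ≤ W.toList.length := two_le_N W ha hb hab
  set N := W.toList.length with hNdef
  have h1 : 0 ≤ t % (N : ℤ) := Int.emod_nonneg t (by exact_mod_cast hN.ne')
  have h2 : t % (N : ℤ) < N := Int.emod_lt_of_pos t (by exact_mod_cast hN)
  set r := (t % (N : ℤ)).toNat with hr
  have hrN : r < N := by omega
  have htr : t % (N : ℤ) = r := by omega
  have hXt : Xi W hW t = W.toList[r]'(by omega) := rfl
  have hone : (1 : ℤ) % (N : ℤ) = 1 := Int.emod_eq_of_lt (by omega) (by omega)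
  by_cases hcase : r + 1 < N
  · have hmod : (t + 1) % (N : ℤ) = (r : ℤ) + 1 := by
      rw [Int.add_emod, htr, hone, Int.emod_eq_of_lt (by omega) (by omega)]
    have hXt1 : Xi W hW (t + 1) = W.toList[r + 1]'(by omega) := by
      unfold Xi
      exact getElem_congr'' _ (by rw [hmod]; omega) _
    rw [hXt, hXt1]
    have hch := List.isChain_iff_getElem.1 W.chain_ne r (by omega)
    simpa using hch
  · have hreq : r + 1 = N := by omega
    have hmod : (t + 1) % (N : ℤ) = 0 := by
      rw [Int.add_emod, htr, hone, show (r : ℤ) + 1 = (N : ℤ) by omega, Int.emod_self]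
    have hXt1 : Xi W hW (t + 1) = W.toList[0]'(by omega) := by
      unfold Xi
      exact getElem_congr'' _ (by rw [hmod]; simp) _
    rw [hXt, hXt1]
    have hbr : W.toList[r]'(by omega) = b := by
      have hlast : W.toList.getLast hW = b := by
        rw [List.getLast?_eq_getLast hW] at hb
        exact Option.some_injective _ hb
      rw [← hlast, List.getLast_eq_getElem]
      exact getElem_congr'' _ (by omega) _
    have har : W.toList[0]'(by omega) = a := by
      have hhead : W.toList.head hW = a := by
        rw [List.head?_eq_head hW] at ha
        exact Option.some_injective _ ha
      rw [← hhead]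
      exact List.getElem_zero _
    rw [hbr, har]
    exact fun h => hab h.symm

lemma period_of_window (W : Word M) (hW : W.toList ≠ []) (p A B : ℤ)
    (hlen : A + W.toList.length ≤ B)
    (hwin : ∀ u : ℤ, A ≤ u → u < B → Xi W hW u = Xi W hW (u - p)) :
    p ∈ periods W hW := by
  rw [mem_periods]
  intro t
  have hN : 0 < ((W.toList.length : ℤ)) := by
    exact_mod_cast List.length_pos_iff.2 hW
  set N : ℤ := (W.toList.length : ℤ) with hNdef
  set u := A + (t + p - A) % N with hu
  have hu1 : A ≤ u := by
    have := Int.emod_nonneg (t + p - A) hN.ne'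
    omega
  have hu2 : u < B := by
    have := Int.emod_lt_of_pos (t + p - A) hN
    omega
  have e1 : Xi W hW u = Xi W hW (t + p) := Xi_congr W hW (by
    rw [hu, Int.add_emod A, Int.emod_emod_of_dvd _ dvd_rfl, ← Int.add_emod]
    congr 1
    ring)
  have e2 : Xi W hW (u - p) = Xi W hW t := Xi_congr W hW (by
    have hdef := Int.emod_def (t + p - A) N
    rw [hu, show A + (t + p - A) % N - p = (t + p - A) % N - (t + p - A) + t by ring, hdef,
      show t + p - A - N * ((t + p - A) / N) - (t + p - A) + t = t - N * ((t + p - A) / N) by ring,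
      Int.sub_emod, Int.mul_emod_right, sub_zero, Int.emod_emod_of_dvd _ dvd_rfl])
  rw [← e1, hwin u hu1 hu2, e2]

def PW (W : Word M) (hW : W.toList ≠ [])
    (hadj : ∀ t : ℤ, (Xi W hW t).1 ≠ (Xi W hW (t + 1)).1) (n : ℕ) : Word M where
  toList := (List.range n).map fun t : ℕ => Xi W hW (t : ℤ)
  ne_one := by
    intro l hl
    simp only [List.mem_map, List.mem_range] at hl
    obtain ⟨t, _, rfl⟩ := hl
    exact Xi_ne_one W hW t
  chain_ne := by
    rw [List.isChain_map, List.isChain_iff_getElem]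
    intro i hi
    simp only [List.get_eq_getElem, List.getElem_range]
    have h := hadj (i : ℤ)
    rwa [show ((i : ℤ) + 1) = ((i + 1 : ℕ) : ℤ) by push_cast; ring] at h

variable (W : Word M) (hW : W.toList ≠ [])
    (hadj : ∀ t : ℤ, (Xi W hW t).1 ≠ (Xi W hW (t + 1)).1)

lemma PW_toList (n : ℕ) :
    (PW W hW hadj n).toList = (List.range n).map (fun t : ℕ => Xi W hW (t : ℤ)) := rfl

lemma PW_length (n : ℕ) : (PW W hW hadj n).toList.length = n := by simp [PW_toList]

lemma PW_getElem (n t : ℕ) (h : t < (PW W hW hadj n).toList.length) :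
    (PW W hW hadj n).toList[t]'h = Xi W hW t := by
  simp [PW_toList]

lemma PW_N : PW W hW hadj W.toList.length = W := by
  apply CoprodI.Word.ext
  apply List.ext_getElem (by simp [PW_toList])
  intro t h1 h2
  rw [PW_getElem]
  exact Xi_nat W hW t h2

lemma prod_PW_add (a b : ℕ) (hmem : (a : ℤ) ∈ periods W hW) :
    (PW W hW hadj (a + b)).prod = (PW W hW hadj a).prod * (PW W hW hadj b).prod := by
  rw [word_prod_eq_lprod, word_prod_eq_lprod, word_prod_eq_lprod, PW_toList, PW_toList, PW_toList,
    List.range_add, List.map_append, lprod_append, List.map_map]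
  congr 2
  apply List.map_congr_left
  intro t ht
  simp only [Function.comp]
  rw [show ((a + t : ℕ) : ℤ) = (t : ℤ) + (a : ℤ) by push_cast; ring]
  exact (mem_periods W hW _).1 hmem t
lemma PW_getElem? (nn t : ℕ) (h : t < nn) :
    (PW W hW hadj nn).toList[t]? = some (Xi W hW t) := by
  rw [List.getElem?_eq_getElem (by rw [PW_length]; omega), PW_getElem]

lemma PW_prod_zero : (PW W hW hadj 0).prod = 1 := by
  simp [word_prod_eq_lprod, PW_toList, lprod]

lemma centralizer_cyclic (W : Word M) {a b : Σ i, M i}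
    (ha : W.toList.head? = some a) (hb : W.toList.getLast? = some b) (hab : a.1 ≠ b.1) :
    ∃ h₀ : CoprodI M, (∃ m : ℕ, 0 < m ∧ W.prod = h₀ ^ m) ∧
      ∀ c : CoprodI M, c * W.prod = W.prod * c → ∃ n : ℤ, c = h₀ ^ n := by
  have hW : W.toList ≠ [] := by intro h; rw [h] at ha; simp at ha
  have hadj := Xi_adj W hW ha hb hab
  have hN : 0 < W.toList.length := List.length_pos_iff.2 hW
  set N := W.toList.length with hNdef
  obtain ⟨d0, hd0⟩ := Int.subgroup_cyclic (periods W hW)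
  have hmemdvd : ∀ p : ℤ, p ∈ periods W hW ↔ d0 ∣ p := by
    intro p
    rw [hd0, AddSubgroup.mem_closure_singleton]
    constructor
    · rintro ⟨n, rfl⟩; exact ⟨n, by rw [zsmul_eq_mul]; push_cast; ring⟩
    · rintro ⟨n, rfl⟩; exact ⟨n, by rw [zsmul_eq_mul]; push_cast; ring⟩
  have hNmem : (N : ℤ) ∈ periods W hW := N_mem_periods W hW
  have hd0N : d0 ∣ (N : ℤ) := (hmemdvd _).1 hNmem
  have hd0ne : d0 ≠ 0 := by
    rintro rfl
    rw [zero_dvd_iff] at hd0N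
    exact hN.ne' (by exact_mod_cast hd0N)
  set D := d0.natAbs with hDdef
  have hDpos : 0 < D := Int.natAbs_pos.2 hd0ne
  have hdvdD : ∀ p : ℤ, p ∈ periods W hW ↔ (D : ℤ) ∣ p := by
    intro p
    rw [hmemdvd, hDdef]
    exact ⟨fun h => (Int.natAbs_dvd).2 h, fun h => (Int.natAbs_dvd).1 h⟩
  have hDmem : ((D : ℕ) : ℤ) ∈ periods W hW := (hdvdD _).2 dvd_rfl
  have hDN : D ∣ N := by
    have h := (hdvdD _).1 hNmem
    exact_mod_cast h
  set h₀ := (PW W hW hadj D).prod with hh₀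
  have hpowD : ∀ m : ℕ, (PW W hW hadj (m * D)).prod = h₀ ^ m := by
    intro m
    induction m with
    | zero => simpa using PW_prod_zero W hW hadj
    | succ m ih =>
      rw [show (m + 1) * D = D + m * D by ring, prod_PW_add W hW hadj D (m * D) hDmem, ih,
        ← hh₀, ← pow_succ']
  have hWprod : W.prod = h₀ ^ (N / D) := by
    conv_rhs => rw [← hpowD (N / D)]
    rw [Nat.div_mul_cancel hDN, PW_N W hW hadj]
  refine ⟨h₀, ⟨N / D, Nat.div_pos (Nat.le_of_dvd hN hDN) hDpos, hWprod⟩, ?_⟩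
  intro c hc
  have hcom : ∀ n : ℕ, c * W.prod ^ n = W.prod ^ n * c := fun n =>
    ((Commute.pow_right hc n)).eq
  have hwn : ∀ n : ℕ, W.prod ^ n = (PW W hW hadj (n * N)).prod := by
    intro n
    induction n with
    | zero => rw [pow_zero, show 0 * N = 0 by ring, PW_prod_zero W hW hadj]
    | succ n ih =>
      have hmult : ((n * N : ℕ) : ℤ) ∈ periods W hW := by
        rw [hmemdvd]
        push_cast
        exact hd0N.mul_left _
      rw [pow_succ, show (n + 1) * N = n * N + N by ring,
        prod_PW_add W hW hadj (n * N) N hmult, ih, PW_N W hW hadj]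
  set k := ell c with hk
  set n := 2 * k + 1 with hn
  have hkN : k ≤ k * N := Nat.le_mul_of_pos_right k hN
  have hmulnN : n * N = 2 * (k * N) + N := by rw [hn]; ring
  have hknN : k ≤ n * N := by omega
  obtain ⟨j, l, hj, hl, hA⟩ := smul_nf_suffix c (PW W hW hadj (n * N))
  have hAZ : (nf (c * W.prod ^ n)).toList = l ++ ((PW W hW hadj (n * N)).toList).drop j := by
    rw [nf_mul, hwn n, nf_prod]
    exact hA
  obtain ⟨j', r', hj', hr', hB⟩ := mul_nf_prefix (PW W hW hadj (n * N)) c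
  rw [PW_length] at hB
  have hBZ : (nf (c * W.prod ^ n)).toList =
      ((PW W hW hadj (n * N)).toList).take (n * N - j') ++ r' := by
    rw [hcom n, hwn n]
    exact hB
  set ZL := (nf (c * W.prod ^ n)).toList with hZL
  have hlenPW : ((PW W hW hadj (n * N)).toList).length = n * N := PW_length W hW hadj _
  have hlen1 : ZL.length = l.length + (n * N - j) := by
    rw [hAZ]
    simp [hlenPW]
  have hlen2 : ZL.length = (n * N - j') + r'.length := by
    rw [hBZ]
    simp only [List.length_append, List.length_take, hlenPW]
    omega
  set s : ℤ := (l.length : ℤ) - (j : ℤ) with hs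
  have posB : ∀ t : ℕ, t < n * N - j' → ZL[t]? = some (Xi W hW t) := by
    intro t ht
    rw [hBZ, List.getElem?_append_left (by simp only [List.length_take, hlenPW]; omega),
      List.getElem?_take_of_lt ht, PW_getElem? W hW hadj _ _ (by omega)]
  have posA : ∀ t : ℕ, l.length ≤ t → t < ZL.length → ZL[t]? = some (Xi W hW ((t : ℤ) - s)) := by
    intro t ht1 ht2
    rw [hAZ, List.getElem?_append_right ht1, List.getElem?_drop,
      PW_getElem? W hW hadj _ _ (by omega)]
    congr 2
    omega
  have hwin : ∀ u : ℤ, ((l.length : ℕ) : ℤ) ≤ u → u < ((n * N - j' : ℕ) : ℤ) →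
      Xi W hW u = Xi W hW (u - s) := by
    intro u h1 h2
    have h0 : 0 ≤ u := le_trans (by positivity) h1
    set t := u.toNat with htdef
    have hut : u = (t : ℤ) := by omega
    have ht1 : l.length ≤ t := by omega
    have ht2 : t < n * N - j' := by omega
    have ht3 : t < ZL.length := by omega
    have e1 := posB t ht2
    have e2 := posA t ht1 ht3
    rw [e1] at e2
    rw [hut]
    exact Option.some_injective _ e2
  have hwinlen : ((l.length : ℕ) : ℤ) + (N : ℤ) ≤ ((n * N - j' : ℕ) : ℤ) := by omega
  have hsper : s ∈ periods W hW :=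
    period_of_window W hW s _ _ hwinlen hwin
  have hsmem := (mem_periods W hW s).1 hsper
  have hlllen : l.length ≤ n * N - j' := by omega
  have hpre : ∀ t : ℕ, t < ZL.length → ZL[t]? = some (Xi W hW t) := by
    intro t ht
    by_cases hcase : t < n * N - j'
    · exact posB t hcase
    · rw [posA t (by omega) ht]
      congr 1
      have h := hsmem ((t : ℤ) - s)
      rw [sub_add_cancel] at h
      exact h.symm
  have hZeq : ZL = (PW W hW hadj ZL.length).toList := by
    apply List.ext_getElem?
    intro t
    by_cases ht : t < ZL.length
    · rw [hpre t ht, PW_getElem? W hW hadj _ _ ht]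
    · rw [List.getElem?_eq_none (by omega), List.getElem?_eq_none (by rw [PW_length]; omega)]
  have hceq : c * W.prod ^ n = (PW W hW hadj ZL.length).prod := by
    conv_lhs => rw [← prod_nf (c * W.prod ^ n)]
    congr 1
    exact CoprodI.Word.ext hZeq
  have hZlen : ((ZL.length : ℕ) : ℤ) = ((n * N : ℕ) : ℤ) + s := by omega
  have hDZlen : D ∣ ZL.length := by
    have hd : (D : ℤ) ∣ ((ZL.length : ℕ) : ℤ) := by
      rw [hZlen]
      exact dvd_add (Int.natCast_dvd_natCast.2 (Dvd.dvd.mul_left hDN n)) ((hdvdD s).1 hsper)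
    exact_mod_cast hd
  have h1 : c * W.prod ^ n = h₀ ^ (ZL.length / D) := by
    rw [hceq, ← hpowD (ZL.length / D), Nat.div_mul_cancel hDZlen]
  have h2 : c = h₀ ^ ((ZL.length / D : ℕ) : ℤ) * (h₀ ^ (((N / D) * n : ℕ) : ℤ))⁻¹ := by
    rw [zpow_natCast, zpow_natCast]
    refine eq_mul_inv_of_mul_eq ?_
    rw [pow_mul, ← hWprod]
    exact h1
  refine ⟨((ZL.length / D : ℕ) : ℤ) - ((N / D) * n : ℕ), ?_⟩
  rw [h2, ← zpow_neg, ← zpow_add, sub_eq_add_neg]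
end Central

theorem coprodI_main {ι : Type*} [DecidableEq ι] {M : ι → Type*} [∀ i, Group (M i)]
    [∀ i, DecidableEq (M i)]
    (c α : CoprodI M) (hα : α ≠ 1) (hc : c * α = α * c)
    (h : ∀ (g : CoprodI M) (i : ι) (x : M i), g⁻¹ * α * g ≠ CoprodI.of x) :
    ∃ (h₁ : CoprodI M) (m n : ℤ), α = h₁ ^ m ∧ c = h₁ ^ n := by
  rcases cyclic_reduction (ell α) α rfl with (h1 | ⟨u, i, x, hx⟩) | ⟨u, w, a, b, ha, hb, hab, hw⟩
  · exact absurd h1 hα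
  · exact absurd (by rw [hx]; group) (h u i x)
  · obtain ⟨h₀, ⟨m, hm, hwm⟩, hcent⟩ := centralizer_cyclic w ha hb hab
    have hc' : (u⁻¹ * c * u) * w.prod = w.prod * (u⁻¹ * c * u) := by
      have h2 : c * (u * w.prod * u⁻¹) = (u * w.prod * u⁻¹) * c := by rw [← hw]; exact hc
      have h3 := congrArg (fun z => u⁻¹ * z * u) h2
      simpa [mul_assoc] using h3
    obtain ⟨n, hn⟩ := hcent _ hc'
    refine ⟨u * h₀ * u⁻¹, (m : ℤ), n, ?_, ?_⟩
    · rw [conj_zpow, zpow_natCast, ← hwm, hw]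
    · rw [conj_zpow, ← hn]
      group
end FPC

universe uu vv in
theorem freeProduct_centralizer_cyclic_aux {G₁ : Type uu} {G₂ : Type vv} [Group G₁] [Group G₂]
    (c α : Coprod G₁ G₂) (hc : c⁻¹ * α * c = α)
    (h1 : ∀ g : Coprod G₁ G₂, ∀ x : G₁, g⁻¹ * α * g ≠ Coprod.inl x)
    (h2 : ∀ g : Coprod G₁ G₂, ∀ y : G₂, g⁻¹ * α * g ≠ Coprod.inr y) :
    ∃ (h : Coprod G₁ G₂) (m n : ℤ), α = h ^ m ∧ c = h ^ n := by
  classical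
  let F : Bool → Type (max uu vv) := fun b => cond b (ULift.{vv} G₁) (ULift.{uu} G₂)
  letI : ∀ b, Group (F b) := fun b => match b with
    | true => (inferInstance : Group (ULift G₁))
    | false => (inferInstance : Group (ULift G₂))
  letI : ∀ b, DecidableEq (F b) := fun _ => Classical.decEq _
  let f : Coprod G₁ G₂ →* CoprodI F :=
    Coprod.lift ((CoprodI.of (i := true)).comp (MulEquiv.ulift.symm.toMonoidHom))
      ((CoprodI.of (i := false)).comp (MulEquiv.ulift.symm.toMonoidHom))
  let g : CoprodI F →* Coprod G₁ G₂ :=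
    CoprodI.lift (fun b => match b with
      | true => Coprod.inl.comp MulEquiv.ulift.toMonoidHom
      | false => Coprod.inr.comp MulEquiv.ulift.toMonoidHom)
  have hgf : ∀ x, g (f x) = x := by
    intro x
    have hcomp : g.comp f = MonoidHom.id _ := by
      apply Coprod.hom_ext <;> ext y <;> rfl
    exact DFunLike.congr_fun hcomp x
  have hα1 : α ≠ 1 := by
    intro h0
    exact h1 1 1 (by rw [h0]; simp)
  have hccomm : f c * f α = f α * f c := by
    rw [← map_mul, ← map_mul]
    congr 1
    calc c * α = c * (c⁻¹ * α * c) := by rw [hc]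
    _ = α * c := by group
  have hnotconj : ∀ (gg : CoprodI F) (i : Bool) (x : F i),
      gg⁻¹ * f α * gg ≠ CoprodI.of x := by
    intro gg i x hx
    have hg := congrArg g hx
    rw [map_mul, map_mul, map_inv, hgf] at hg
    cases i
    · exact h2 (g gg) x.down (by simp [g] at hg; exact hg)
    · exact h1 (g gg) x.down (by simp [g] at hg; exact hg)
  have hαne1' : f α ≠ 1 := by
    intro h0
    apply hα1
    have hh := congrArg g h0
    rwa [hgf, map_one] at hh
  obtain ⟨h₁, m, n, hαm, hcn⟩ := @FPC.coprodI_main Bool instDecidableEqBool F _ _ (f c) (f α) hαne1' hccomm hnotconj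
  refine ⟨g h₁, m, n, ?_, ?_⟩
  · have hh := congrArg g hαm
    rwa [hgf, map_zpow] at hh
  · have hh := congrArg g hcn
    rwa [hgf, map_zpow] at hh

/-- In a free product `G₁ * G₂`, if `c` centralizes `α` and `α` is not conjugate into either
factor, then `α` and `c` are powers of a common element. -/
theorem freeProduct_centralizer_cyclic {G₁ G₂ : Type*} [Group G₁] [Group G₂]
    (c α : Coprod G₁ G₂) (hc : c⁻¹ * α * c = α)
    (h1 : ∀ g : Coprod G₁ G₂, ∀ x : G₁, g⁻¹ * α * g ≠ Coprod.inl x)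
    (h2 : ∀ g : Coprod G₁ G₂, ∀ y : G₂, g⁻¹ * α * g ≠ Coprod.inr y) :
    ∃ (h : Coprod G₁ G₂) (m n : ℤ), α = h ^ m ∧ c = h ^ n :=
  freeProduct_centralizer_cyclic_aux c α hc h1 h2
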